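/- Let H be a real Hilbert space. For n ≥ 0 let α_n ∈ (0,1) and let R_n : H → H be α_n-averaged, i.e., R_n = (1 − α_n) Id + α_n T_n for some nonexpansive T_n : H → H, and suppose S := ∩_{n≥0} Fix R_n ≠ ∅, liminf_{n→+∞} α_n > 0 and Σ_{n≥1} |1/α_n − 1/α_{n−1}| < +∞. Let (x_n)_{n≥0} be generated by x_{n+1} = β_n x_n + λ_n (R_n(β_n x_n) − β_n x_n) for all n ≥ 0 from a starting point x_0 ∈ H, where (i) 0 < β_n ≤ 1 for all n ≥ 0, β_n → 1, Σ_{n≥0}(1 − β_n) = +∞, and Σ_{n≥1} |β_n − β_{n−1}| < +∞; (ii) 0 < λ_n ≤ 1/α_n for all n ≥ 0, liminf_{n→+∞} λ_n > 0, and Σ_{n≥1} |λ_n − λ_{n−1}| < +∞; (iii) Σ_{n≥1} ‖R_n(β_{n−1} x_{n−1}) − R_{n−1}(β_{n−1} x_{n−1})‖ < +∞. Suppose further that for any subsequence (x_{n_k})_{k≥0} of (x_n)_{n≥0} converging weakly to some x ∈ H (i.e., ⟨x_{n_k}, z⟩ → ⟨x, z⟩ for all z ∈ H) with x_{n_k}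 − R_{n_k} x_{n_k} → 0 strongly, one has x ∈ S. If x̄ ∈ S satisfies ‖x̄‖ ≤ ‖y‖ for all y ∈ S, then (x_n)_{n≥0} converges strongly to x̄. -/

import Mathlib

open Filter TopologicalSpace

lemma xu_lemma (s γ δ ε : ℕ → ℝ) (hs : ∀ n, 0 ≤ s n)
    (hγ0 : ∀ n, 0 ≤ γ n) (hγ1 : ∀ n, γ n ≤ 1) (hγdiv : ¬ Summable γ)
    (hδ : ∀ c : ℝ, 0 < c → ∀ᶠ n in atTop, δ n ≤ c)
    (hε0 : ∀ n, 0 ≤ ε n) (hε : Summable ε)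
    (hrec : ∀ n, s (n + 1) ≤ (1 - γ n) * s n + γ n * δ n + ε n) :
    Tendsto s atTop (nhds 0) := by
  have key : ∀ c : ℝ, 0 < c → ∀ᶠ n in atTop, s n ≤ c := by
    intro c hc
    have hc4 : (0:ℝ) < c/4 := by linarith
    obtain ⟨N₁, hN₁⟩ := (hδ (c/4) hc4).exists_forall_of_atTop
    obtain ⟨N₂, hN₂⟩ : ∃ N₂, ∑' k, ε (k + N₂) ≤ c/4 := by
      have := tendsto_sum_nat_add ε
      obtain ⟨N₂, hN₂⟩ := (this.eventually (eventually_le_nhds hc4)).exists_forall_of_atTop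
      exact ⟨N₂, hN₂ N₂ le_rfl⟩
    set N := max N₁ N₂ with hN
    have hNN₁ : N₁ ≤ N := le_max_left _ _
    have hNN₂ : N₂ ≤ N := le_max_right _ _
    have htail : ∀ m, ∑ k ∈ Finset.range m, ε (N + k) ≤ c/4 := by
      intro m
      have hsum : Summable fun k => ε (N + k) := by
        have := (summable_nat_add_iff N).2 hε
        simpa [add_comm] using this
      have h1 : ∑ k ∈ Finset.range m, ε (N + k) ≤ ∑' k, ε (N + k) :=
        Summable.sum_le_tsum (Finset.range m) (fun i _ => hε0 _) hsum
      have h2 : ∑' k, ε (N + k) ≤ ∑' k, ε (k + N₂) := by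
        have hre : ∀ k, ε (N + k) = ε ((k + (N - N₂)) + N₂) := by
          intro k; congr 1; omega
        calc ∑' k, ε (N + k) = ∑' k, ε ((k + (N - N₂)) + N₂) := tsum_congr hre
          _ ≤ ∑' k, ε (k + N₂) := by
              apply Summable.tsum_le_tsum_of_inj (fun k => k + (N - N₂))
              · exact add_left_injective _
              · intro j _; exact hε0 _
              · intro k; exact le_rfl
              · exact ((summable_nat_add_iff N₂).2 hε).comp_injective (add_left_injective _)
              · exact (summable_nat_add_iff N₂).2 hε
      linarith
    set P : ℕ → ℝ := fun m => ∏ k ∈ Finset.range m, (1 - γ (N + k)) with hP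
    have hP0 : ∀ m, 0 ≤ P m := fun m =>
      Finset.prod_nonneg (fun k _ => by have := hγ1 (N + k); linarith)
    have claim : ∀ m, s (N + m) ≤ P m * s N + c/4 + ∑ k ∈ Finset.range m, ε (N + k) := by
      intro m
      induction m with
      | zero => simp [hP]; linarith [hs N]
      | succ m ih =>
        have hγm0 := hγ0 (N + m); have hγm1 := hγ1 (N + m)
        have h1 : s (N + (m+1)) ≤ (1 - γ (N+m)) * s (N+m) + γ (N+m) * δ (N+m) + ε (N+m) :=
          hrec (N + m)
        have hδm : δ (N + m) ≤ c/4 := hN₁ _ (le_trans hNN₁ (Nat.le_add_right N m))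
        have h2 : (1 - γ (N+m)) * s (N+m) ≤ (1 - γ (N+m)) * (P m * s N + c/4 + ∑ k ∈ Finset.range m, ε (N + k)) :=
          mul_le_mul_of_nonneg_left ih (by linarith)
        have hPm : P (m+1) = P m * (1 - γ (N+m)) := by
          simp [hP, Finset.prod_range_succ]
        have hsumε : 0 ≤ ∑ k ∈ Finset.range m, ε (N + k) :=
          Finset.sum_nonneg (fun k _ => hε0 _)
        have hsN := hs N
        rw [Finset.sum_range_succ]
        nlinarith [hP0 m, mul_nonneg (hP0 m) hsN]
    have hPlim : Tendsto (fun m => P m * s N) atTop (nhds 0) := by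
      have hexp : ∀ m, P m ≤ Real.exp (-(∑ k ∈ Finset.range m, γ (N + k))) := by
        intro m
        calc P m ≤ ∏ k ∈ Finset.range m, Real.exp (-(γ (N + k))) := by
              apply Finset.prod_le_prod
              · intro k _; have := hγ1 (N + k); linarith
              · intro k _
                have h := Real.add_one_le_exp (-(γ (N + k)))
                linarith
          _ = Real.exp (∑ k ∈ Finset.range m, -(γ (N + k))) := (Real.exp_sum _ _).symm
          _ = Real.exp (-(∑ k ∈ Finset.range m, γ (N + k))) := by rw [Finset.sum_neg_distrib]
      have hdiv : Tendsto (fun m => ∑ k ∈ Finset.range m, γ (N + k)) atTop atTop := by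
        have hns : ¬ Summable fun k => γ (N + k) := by
          intro h
          exact hγdiv ((summable_nat_add_iff N).1 (by simpa [add_comm] using h))
        exact (not_summable_iff_tendsto_nat_atTop_of_nonneg (fun k => hγ0 _)).1 hns
      have hPto : Tendsto P atTop (nhds 0) := by
        apply squeeze_zero hP0 hexp
        exact Real.tendsto_exp_atBot.comp (tendsto_neg_atTop_atBot.comp hdiv)
      simpa using hPto.mul_const (s N)
    have hPev : ∀ᶠ m in atTop, P m * s N ≤ c/4 := hPlim.eventually (eventually_le_nhds hc4)
    obtain ⟨M₀, hM₀⟩ := hPev.exists_forall_of_atTop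
    rw [eventually_atTop]
    refine ⟨N + M₀, fun n hn => ?_⟩
    obtain ⟨m, rfl⟩ : ∃ m, n = N + m := ⟨n - N, by omega⟩
    have hm : M₀ ≤ m := by omega
    have h1 := claim m
    have h2 := htail m
    have h3 := hM₀ m hm
    linarith
  rw [Metric.tendsto_atTop]
  intro e he
  obtain ⟨N, hN⟩ := (key (e/2) (by linarith)).exists_forall_of_atTop
  exact ⟨N, fun n hn => by
    have h1 := hs n; have h2 := hN n hn
    simp only [Real.dist_eq, sub_zero]
    rw [abs_of_nonneg h1]; linarith⟩
open scoped RealInnerProductSpace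

lemma weak_cpt {H : Type*} [NormedAddCommGroup H] [InnerProductSpace ℝ H] [CompleteSpace H]
    (v : ℕ → H) (M : ℝ) (hv : ∀ n, ‖v n‖ ≤ M) :
    ∃ (φ : ℕ → ℕ) (x : H), StrictMono φ ∧
      ∀ z : H, Tendsto (fun k => ⟪v (φ k), z⟫) atTop (nhds ⟪x, z⟫) := by
  have hM0 : 0 ≤ M := le_trans (norm_nonneg (v 0)) (hv 0)
  -- the separable closed subspace containing all v n
  set K : Submodule ℝ H := (Submodule.span ℝ (Set.range v)).topologicalClosure with hKdef
  have hvK : ∀ n, v n ∈ K := fun n =>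
    (Submodule.le_topologicalClosure _) (Submodule.subset_span (Set.mem_range_self n))
  have hKclosed : IsClosed (K : Set H) := Submodule.isClosed_topologicalClosure _
  haveI : CompleteSpace K := hKclosed.completeSpace_coe
  -- a countable dense family in K
  have hsep : IsSeparable (K : Set H) := by
    have h1 : IsSeparable (Set.range v) := (Set.countable_range v).isSeparable
    have h2 := h1.span (R := ℝ)
    simpa [hKdef, Submodule.topologicalClosure_coe] using h2.closure
  obtain ⟨c, hc_count, hc_sub⟩ := hsep
  obtain ⟨e, hce⟩ : ∃ e : ℕ → H, c ∪ {0} ⊆ Set.range e := by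
    obtain ⟨e, he⟩ := (hc_count.union (Set.countable_singleton 0)).exists_eq_range
      (Set.union_nonempty.2 (Or.inr ⟨0, rfl⟩))
    exact ⟨e, he.le⟩
  have hdense : ∀ w ∈ K, ∀ ε : ℝ, 0 < ε → ∃ j, ‖w - e j‖ < ε := by
    intro w hw ε hε
    have hwcl : w ∈ closure c := hc_sub hw
    obtain ⟨y, hy, hdy⟩ := Metric.mem_closure_iff.1 hwcl ε hε
    obtain ⟨j, hj⟩ := hce (Set.mem_union_left _ hy)
    exact ⟨j, by rw [← dist_eq_norm, hj]; exact hdy⟩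
  -- extract subsequence converging against each e j, via compactness of a product of intervals
  set B : Set (ℕ → ℝ) := Set.univ.pi (fun j => Set.Icc (-(M * ‖e j‖)) (M * ‖e j‖)) with hBdef
  have hBcpt : IsCompact B := isCompact_univ_pi (fun j => isCompact_Icc)
  have hmem : ∀ n, (fun j => ⟪v n, e j⟫) ∈ B := by
    intro n j _
    have h1 : |⟪v n, e j⟫| ≤ ‖v n‖ * ‖e j‖ := abs_real_inner_le_norm _ _
    have h2 : ‖v n‖ * ‖e j‖ ≤ M * ‖e j‖ :=
      mul_le_mul_of_nonneg_right (hv n) (norm_nonneg _)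
    constructor
    · nlinarith [abs_nonneg ⟪v n, e j⟫, le_abs_self ⟪v n, e j⟫, neg_abs_le ⟪v n, e j⟫]
    · nlinarith [le_abs_self ⟪v n, e j⟫]
  obtain ⟨g, -, φ, hφ, hconv⟩ := hBcpt.isSeqCompact hmem
  have hconv' : ∀ j, Tendsto (fun k => ⟪v (φ k), e j⟫) atTop (nhds (g j)) := by
    intro j
    exact (tendsto_pi_nhds.1 hconv) j
  -- Cauchy against every z
  have hlim : ∀ z : H, ∃ L : ℝ, Tendsto (fun k => ⟪v (φ k), z⟫) atTop (nhds L) := by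
    intro z
    set w : H := (K.orthogonalProjectionOnto z : H) with hw
    have hwK : (K.orthogonalProjectionOnto z : H) ∈ K := SetLike.coe_mem _
    have heq : ∀ n, ⟪v n, z⟫ = ⟪v n, w⟫ := by
      intro n
      have horth : z - w ∈ Kᗮ := Submodule.sub_starProjection_mem_orthogonal (K := K) z
      have h0 : ⟪v n, z - w⟫ = 0 := Submodule.inner_right_of_mem_orthogonal (hvK n) horth
      have := inner_sub_right (𝕜 := ℝ) (v n) z w
      rw [h0] at this
      linarith
    have hCauchy : CauchySeq (fun k => ⟪v (φ k), w⟫) := by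
      rw [Metric.cauchySeq_iff]
      intro ε hε
      have hε3 : (0:ℝ) < ε / (3 * (M + 1)) := by positivity
      obtain ⟨j, hj⟩ := hdense w hwK _ hε3
      have hCj : CauchySeq (fun k => ⟪v (φ k), e j⟫) := (hconv' j).cauchySeq
      obtain ⟨N, hN⟩ := Metric.cauchySeq_iff.1 hCj (ε/3) (by linarith)
      refine ⟨N, fun a ha b hb => ?_⟩
      have key : ∀ k, |⟪v (φ k), w⟫ - ⟪v (φ k), e j⟫| ≤ ε/3 := by
        intro k
        have h1 : ⟪v (φ k), w⟫ - ⟪v (φ k), e j⟫ = ⟪v (φ k), w - e j⟫ := by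
          rw [inner_sub_right]
        rw [h1]
        calc |⟪v (φ k), w - e j⟫| ≤ ‖v (φ k)‖ * ‖w - e j‖ := abs_real_inner_le_norm _ _
          _ ≤ M * (ε / (3 * (M + 1))) := by
              apply mul_le_mul (hv _) hj.le (norm_nonneg _) hM0
          _ ≤ ε/3 := by
              rw [mul_div_assoc', div_le_div_iff₀ (by positivity) (by norm_num)]
              nlinarith
      have hab := hN a ha b hb
      rw [Real.dist_eq] at hab ⊢
      have k1 := key a; have k2 := key b
      have : |⟪v (φ a), w⟫ - ⟪v (φ b), w⟫| ≤
          |⟪v (φ a), w⟫ - ⟪v (φ a), e j⟫| + |⟪v (φ a), e j⟫ - ⟪v (φ b), e j⟫|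
            + |⟪v (φ b), e j⟫ - ⟪v (φ b), w⟫| := by
        have := abs_sub_le (⟪v (φ a), w⟫) (⟪v (φ a), e j⟫) (⟪v (φ b), w⟫)
        have := abs_sub_le (⟪v (φ a), e j⟫) (⟪v (φ b), e j⟫) (⟪v (φ b), w⟫)
        linarith
      rw [abs_sub_comm] at k2
      linarith
    obtain ⟨L, hL⟩ := cauchySeq_tendsto_of_complete hCauchy
    exact ⟨L, by simpa only [heq] using hL⟩
  -- build the weak limit via Riesz representation
  choose L hL using hlim
  have hadd : ∀ z₁ z₂ : H, L (z₁ + z₂) = L z₁ + L z₂ := by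
    intro z₁ z₂
    have h1 : Tendsto (fun k => ⟪v (φ k), z₁⟫ + ⟪v (φ k), z₂⟫) atTop (nhds (L z₁ + L z₂)) :=
      (hL z₁).add (hL z₂)
    have h2 : Tendsto (fun k => ⟪v (φ k), z₁ + z₂⟫) atTop (nhds (L (z₁ + z₂))) := hL _
    have h3 : (fun k => ⟪v (φ k), z₁ + z₂⟫) = fun k => ⟪v (φ k), z₁⟫ + ⟪v (φ k), z₂⟫ := by
      funext k; exact inner_add_right _ _ _
    rw [h3] at h2
    exact tendsto_nhds_unique h2 h1
  have hsmul : ∀ (a : ℝ) (z : H), L (a • z) = a * L z := by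
    intro a z
    have h1 : Tendsto (fun k => a * ⟪v (φ k), z⟫) atTop (nhds (a * L z)) := (hL z).const_mul a
    have h2 : Tendsto (fun k => ⟪v (φ k), a • z⟫) atTop (nhds (L (a • z))) := hL _
    have h3 : (fun k => ⟪v (φ k), a • z⟫) = fun k => a * ⟪v (φ k), z⟫ := by
      funext k; exact real_inner_smul_right _ _ _
    rw [h3] at h2
    exact tendsto_nhds_unique h2 h1
  have hbd : ∀ z : H, |L z| ≤ M * ‖z‖ := by
    intro z
    have h1 : Tendsto (fun k => |⟪v (φ k), z⟫|) atTop (nhds (|L z|)) := (hL z).abs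
    apply le_of_tendsto h1
    filter_upwards with k
    calc |⟪v (φ k), z⟫| ≤ ‖v (φ k)‖ * ‖z‖ := abs_real_inner_le_norm _ _
      _ ≤ M * ‖z‖ := mul_le_mul_of_nonneg_right (hv _) (norm_nonneg _)
  set Llin : H →ₗ[ℝ] ℝ :=
    { toFun := L, map_add' := hadd, map_smul' := hsmul } with hLlin
  set F : H →L[ℝ] ℝ := LinearMap.mkContinuous Llin M (fun z => by
    simpa [hLlin, Real.norm_eq_abs] using hbd z) with hF
  set x : H := (InnerProductSpace.toDual ℝ H).symm F with hx
  refine ⟨φ, x, hφ, fun z => ?_⟩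
  have hxz : ⟪x, z⟫ = F z := by
    have := InnerProductSpace.toDual_symm_apply (𝕜 := ℝ) (E := H) (y := F) (x := z)
    simpa [hx] using this
  rw [hxz]
  exact hL z
open Filter

lemma fix_seg {H : Type*} [NormedAddCommGroup H] [InnerProductSpace ℝ H] (T : H → H)
    (hT : ∀ a b, ‖T a - T b‖ ≤ ‖a - b‖) (x y : H) (hx : T x = x) (hy : T y = y)
    (t : ℝ) (ht0 : 0 ≤ t) (ht1 : t ≤ 1) : T (x + t • (y - x)) = x + t • (y - x) := by
  by_cases hxy : x = y
  · subst hxy; simpa using hx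
  set z : H := x + t • (y - x) with hz
  set w : H := T z with hwdef
  set d : ℝ := ‖y - x‖ with hd
  have hd0 : 0 < d := by
    rw [hd, norm_pos_iff, sub_ne_zero]; exact fun h => hxy h.symm
  have hzx : z - x = t • (y - x) := by rw [hz]; abel
  have hzy : z - y = (t - 1) • (y - x) := by
    rw [hz]; rw [smul_sub, sub_smul]; module
  have d1 : ‖w - x‖ ≤ t * d := by
    calc ‖w - x‖ = ‖T z - T x‖ := by rw [hwdef, hx]
      _ ≤ ‖z - x‖ := hT z x
      _ = t * d := by rw [hzx, norm_smul, Real.norm_eq_abs, abs_of_nonneg ht0]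
  have d2 : ‖w - y‖ ≤ (1 - t) * d := by
    calc ‖w - y‖ = ‖T z - T y‖ := by rw [hwdef, hy]
      _ ≤ ‖z - y‖ := hT z y
      _ = (1 - t) * d := by
          rw [hzy, norm_smul, Real.norm_eq_abs, abs_of_nonpos (by linarith)]; ring
  have htri : d ≤ ‖w - x‖ + ‖w - y‖ := by
    calc d = ‖(w - x) - (w - y)‖ := by rw [hd]; congr 1; abel
      _ ≤ ‖w - x‖ + ‖w - y‖ := by
          have := norm_sub_le (w - x) (w - y)
          linarith
  have e1 : ‖w - x‖ = t * d := by nlinarith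
  have e2 : ‖w - y‖ = (1 - t) * d := by nlinarith
  have heq : dist x w + dist w y = dist x y := by
    rw [dist_eq_norm, dist_eq_norm, dist_eq_norm, norm_sub_rev x w, e1, e2]
    have hxy' : ‖x - y‖ = d := by rw [hd, norm_sub_rev]
    rw [hxy']; ring
  have hwbtw : Wbtw ℝ x w y := dist_add_dist_eq_iff.1 heq
  obtain ⟨r, ⟨hr0, hr1⟩, hrw⟩ := hwbtw
  have hrw' : w = x + r • (y - x) := by
    rw [← hrw]; simp [AffineMap.lineMap_apply]; module
  have hdist : ‖w - x‖ = r * d := by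
    rw [hrw']
    have : x + r • (y - x) - x = r • (y - x) := by abel
    rw [this, norm_smul, Real.norm_eq_abs, abs_of_nonneg hr0]
  have hrt : r = t := by
    rw [e1] at hdist
    have := mul_right_cancel₀ (ne_of_gt hd0) hdist
    linarith
  rw [hwdef] at hrw'
  rw [hwdef, hrw', hrt, hz]

open scoped RealInnerProductSpace

set_option maxHeartbeats 2000000 in
/-- strong convergence for a family of averaged operators to the
minimum-norm common fixed point. -/
theorem stmt_8 {H : Type*} [NormedAddCommGroup H] [InnerProductSpace ℝ H] [CompleteSpace H]
    (α : ℕ → ℝ) (hα : ∀ n, 0 < α n ∧ α n < 1)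
    (T : ℕ → H → H) (hT : ∀ n x y, ‖T n x - T n y‖ ≤ ‖x - y‖)
    (R : ℕ → H → H) (hR : ∀ n y, R n y = (1 - α n) • y + α n • T n y)
    (hfix : ∃ p : H, ∀ n, R n p = p)
    (hαinf : ∃ c : ℝ, 0 < c ∧ ∀ᶠ n in Filter.atTop, c ≤ α n)
    (hαsum : Summable (fun n => |1 / α (n + 1) - 1 / α n|))
    (β lam : ℕ → ℝ) (u : ℕ → H)
    (hrec : ∀ n, u (n + 1) = β n • u n + lam n • (R n (β n • u n) - β n • u n))
    (hβ : ∀ n, 0 < β n ∧ β n ≤ 1)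
    (hβlim : Filter.Tendsto β Filter.atTop (nhds 1))
    (hβdiv : ¬ Summable (fun n => 1 - β n))
    (hβsum : Summable (fun n => |β (n + 1) - β n|))
    (hlam : ∀ n, 0 < lam n ∧ lam n ≤ 1 / α n)
    (hlaminf : ∃ c : ℝ, 0 < c ∧ ∀ᶠ n in Filter.atTop, c ≤ lam n)
    (hlamsum : Summable (fun n => |lam (n + 1) - lam n|))
    (hRsum : Summable (fun n => ‖R (n + 1) (β n • u n) - R n (β n • u n)‖))
    (hasym : ∀ φ : ℕ → ℕ, StrictMono φ → ∀ x : H,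
      (∀ z : H, Filter.Tendsto (fun k => ⟪u (φ k), z⟫) Filter.atTop (nhds ⟪x, z⟫)) →
      Filter.Tendsto (fun k => u (φ k) - R (φ k) (u (φ k))) Filter.atTop (nhds 0) →
      ∀ n, R n x = x)
    (xb : H) (hxb : ∀ n, R n xb = xb)
    (hmin : ∀ y : H, (∀ n, R n y = y) → ‖xb‖ ≤ ‖y‖) :
    Filter.Tendsto u Filter.atTop (nhds xb) := by
  obtain ⟨p, hp⟩ := hfix
  have hα0 : ∀ n, 0 < α n := fun n => (hα n).1
  have hα1 : ∀ n, α n < 1 := fun n => (hα n).2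
  -- basic identities
  have Rsub : ∀ n y, R n y - y = α n • (T n y - y) := by
    intro n y; rw [hR]; module
  have hRT : ∀ n (x : H), R n x = x ↔ T n x = x := by
    intro n x
    constructor
    · intro h
      have h2 : α n • (T n x - x) = 0 := by rw [← Rsub, h, sub_self]
      rcases smul_eq_zero.1 h2 with h3 | h3
      · exact absurd h3 (ne_of_gt (hα0 n))
      · rw [sub_eq_zero] at h3; exact h3
    · intro h; rw [hR, h]; module
  have Rnonexp : ∀ n (a b : H), ‖R n a - R n b‖ ≤ ‖a - b‖ := by
    intro n a b
    have hid : R n a - R n b = (1 - α n) • (a - b) + α n • (T n a - T n b) := by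
      rw [hR, hR]; module
    rw [hid]
    calc ‖(1 - α n) • (a - b) + α n • (T n a - T n b)‖
        ≤ ‖(1 - α n) • (a - b)‖ + ‖α n • (T n a - T n b)‖ := norm_add_le _ _
      _ = (1 - α n) * ‖a - b‖ + α n * ‖T n a - T n b‖ := by
          rw [norm_smul, norm_smul, Real.norm_eq_abs, Real.norm_eq_abs,
            abs_of_nonneg (by linarith [hα1 n]), abs_of_nonneg (hα0 n).le]
      _ ≤ (1 - α n) * ‖a - b‖ + α n * ‖a - b‖ := by
          have := hT n a b
          nlinarith [hα0 n]
      _ = ‖a - b‖ := by ring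
  set G : ℕ → H → H := fun n y => y + lam n • (R n y - y) with hG
  have hrecG : ∀ n, u (n + 1) = G n (β n • u n) := hrec
  have hμ0 : ∀ n, 0 < lam n * α n := fun n => mul_pos (hlam n).1 (hα0 n)
  have hμ1 : ∀ n, lam n * α n ≤ 1 := by
    intro n
    have h1 := (hlam n).2
    have h2 := hα0 n
    rw [div_eq_mul_inv, one_mul] at h1
    calc lam n * α n ≤ (α n)⁻¹ * α n := mul_le_mul_of_nonneg_right h1 h2.le
      _ = 1 := inv_mul_cancel₀ (ne_of_gt h2)
  have Gform : ∀ n y, G n y = (1 - lam n * α n) • y + (lam n * α n) • T n y := by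
    intro n y
    rw [hG]; simp only []
    rw [Rsub]; module
  have Gnonexp : ∀ n (a b : H), ‖G n a - G n b‖ ≤ ‖a - b‖ := by
    intro n a b
    have hid : G n a - G n b = (1 - lam n * α n) • (a - b) + (lam n * α n) • (T n a - T n b) := by
      rw [Gform, Gform]; module
    rw [hid]
    calc ‖(1 - lam n * α n) • (a - b) + (lam n * α n) • (T n a - T n b)‖
        ≤ ‖(1 - lam n * α n) • (a - b)‖ + ‖(lam n * α n) • (T n a - T n b)‖ := norm_add_le _ _
      _ = (1 - lam n * α n) * ‖a - b‖ + (lam n * α n) * ‖T n a - T n b‖ := by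
          rw [norm_smul, norm_smul, Real.norm_eq_abs, Real.norm_eq_abs,
            abs_of_nonneg (by linarith [hμ1 n]), abs_of_nonneg (hμ0 n).le]
      _ ≤ (1 - lam n * α n) * ‖a - b‖ + (lam n * α n) * ‖a - b‖ := by
          have := hT n a b
          nlinarith [hμ0 n, hμ1 n]
      _ = ‖a - b‖ := by ring
  have Gfix : ∀ n (q : H), R n q = q → G n q = q := by
    intro n q hq
    rw [hG]; simp only []
    rw [hq, sub_self, smul_zero, add_zero]
  -- boundedness
  set M₀ : ℝ := max ‖u 0 - p‖ ‖p‖ with hM₀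
  have hM₀p : ‖p‖ ≤ M₀ := le_max_right _ _
  have hM₀0 : 0 ≤ M₀ := le_trans (norm_nonneg p) hM₀p
  have hybd0 : ∀ n, ‖u n - p‖ ≤ M₀ → ‖β n • u n - p‖ ≤ M₀ := by
    intro n hn
    have hid : β n • u n - p = β n • (u n - p) + (β n - 1) • p := by module
    rw [hid]
    have hβ0 := (hβ n).1; have hβ1' := (hβ n).2
    calc ‖β n • (u n - p) + (β n - 1) • p‖
        ≤ ‖β n • (u n - p)‖ + ‖(β n - 1) • p‖ := norm_add_le _ _
      _ = β n * ‖u n - p‖ + (1 - β n) * ‖p‖ := by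
          rw [norm_smul, norm_smul, Real.norm_eq_abs, Real.norm_eq_abs,
            abs_of_nonneg hβ0.le, abs_of_nonpos (by linarith)]
          ring
      _ ≤ β n * M₀ + (1 - β n) * M₀ := by nlinarith
      _ = M₀ := by ring
  have hbnd : ∀ n, ‖u n - p‖ ≤ M₀ := by
    intro n
    induction n with
    | zero => exact le_max_left _ _
    | succ n ih =>
      rw [hrecG n]
      calc ‖G n (β n • u n) - p‖ = ‖G n (β n • u n) - G n p‖ := by rw [Gfix n p (hp n)]
        _ ≤ ‖β n • u n - p‖ := Gnonexp n _ _
        _ ≤ M₀ := hybd0 n ih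
  set M : ℝ := M₀ + ‖p‖ with hM
  have hM0 : 0 ≤ M := add_nonneg hM₀0 (norm_nonneg _)
  have hu_bd : ∀ n, ‖u n‖ ≤ M := by
    intro n
    calc ‖u n‖ = ‖(u n - p) + p‖ := by congr 1; abel
      _ ≤ ‖u n - p‖ + ‖p‖ := norm_add_le _ _
      _ ≤ M := add_le_add_left (hbnd n) _
  have hy_bd : ∀ n, ‖β n • u n‖ ≤ M := by
    intro n
    rw [norm_smul, Real.norm_eq_abs, abs_of_nonneg (hβ n).1.le]
    calc β n * ‖u n‖ ≤ 1 * ‖u n‖ :=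
          mul_le_mul_of_nonneg_right (hβ n).2 (norm_nonneg _)
      _ ≤ M := by rw [one_mul]; exact hu_bd n
  -- bound for lam
  set Λ : ℝ := |1 / α 0| + ∑' n, |1 / α (n + 1) - 1 / α n| with hΛdef
  have hΛ : ∀ n, lam n ≤ Λ := by
    intro n
    have h1 : 1 / α n = 1 / α 0 + ∑ k ∈ Finset.range n, (1 / α (k + 1) - 1 / α k) := by
      rw [Finset.sum_range_sub (fun k => 1 / α k)]; ring
    have h2 : |1 / α n| ≤ |1 / α 0| + ∑ k ∈ Finset.range n, |1 / α (k + 1) - 1 / α k| := by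
      rw [h1]
      calc |1 / α 0 + ∑ k ∈ Finset.range n, (1 / α (k + 1) - 1 / α k)|
          ≤ |1 / α 0| + |∑ k ∈ Finset.range n, (1 / α (k + 1) - 1 / α k)| := abs_add_le _ _
        _ ≤ |1 / α 0| + ∑ k ∈ Finset.range n, |1 / α (k + 1) - 1 / α k| := by
            have := Finset.abs_sum_le_sum_abs (fun k => 1 / α (k + 1) - 1 / α k) (Finset.range n)
            linarith
    have h3 : ∑ k ∈ Finset.range n, |1 / α (k + 1) - 1 / α k|
        ≤ ∑' k, |1 / α (k + 1) - 1 / α k| :=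
      Summable.sum_le_tsum _ (fun i _ => abs_nonneg _) hαsum
    have h4 : lam n ≤ 1 / α n := (hlam n).2
    have h5 : 1 / α n ≤ |1 / α n| := le_abs_self _
    rw [hΛdef]; linarith
  have hΛ0 : 0 ≤ Λ := le_trans (hlam 0).1.le (hΛ 0)
  -- residual bound
  have hRy_bd : ∀ n m, ‖R m (β n • u n) - β n • u n‖ ≤ 2 * M := by
    intro n m
    calc ‖R m (β n • u n) - β n • u n‖
        = ‖(R m (β n • u n) - R m p) + (p - β n • u n)‖ := by rw [hp m]; abel_nf
      _ ≤ ‖R m (β n • u n) - R m p‖ + ‖p - β n • u n‖ := norm_add_le _ _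
      _ ≤ ‖β n • u n - p‖ + ‖β n • u n - p‖ := by
          have h1 := Rnonexp m (β n • u n) p
          rw [norm_sub_rev p]
          linarith
      _ ≤ 2 * M := by
          have := hybd0 n (hbnd n)
          have hpM : ‖p‖ ≤ M := by rw [hM]; linarith
          have : ‖β n • u n - p‖ ≤ M := by rw [hM]; linarith [norm_nonneg p]
          linarith
  -- Step 2 : successive differences tend to zero
  set s : ℕ → ℝ := fun n => ‖u (n + 1) - u n‖ with hs_def
  set E : ℕ → ℝ := fun n => M * |β (n + 1) - β n|
    + Λ * ‖R (n + 1) (β n • u n) - R n (β n • u n)‖ + (2 * M) * |lam (n + 1) - lam n| with hE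
  have hs0 : Filter.Tendsto s Filter.atTop (nhds 0) := by
    apply xu_lemma s (fun n => 1 - β (n + 1)) (fun _ => 0) E
      (fun n => norm_nonneg _)
      (fun n => by have := (hβ (n+1)).2; show (0:ℝ) ≤ 1 - β (n+1); linarith)
      (fun n => by have := (hβ (n+1)).1; show (1:ℝ) - β (n+1) ≤ 1; linarith)
    · intro h
      exact hβdiv ((summable_nat_add_iff 1).1 h)
    · intro c hc; filter_upwards with n using hc.le
    · intro n
      have := mul_nonneg hM0 (abs_nonneg (β (n+1) - β n))
      have := mul_nonneg hΛ0 (norm_nonneg (R (n + 1) (β n • u n) - R n (β n • u n)))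
      have := mul_nonneg (by linarith : (0:ℝ) ≤ 2*M) (abs_nonneg (lam (n+1) - lam n))
      rw [hE]; dsimp only; linarith
    · exact ((hβsum.mul_left M).add ((hRsum.mul_left Λ).add (hlamsum.mul_left (2*M)))).congr
        (fun n => by rw [hE]; ring)
    · intro n
      have hA : ‖G (n+1) (β (n+1) • u (n+1)) - G (n+1) (β n • u n)‖
          ≤ β (n+1) * s n + |β (n+1) - β n| * M := by
        calc ‖G (n+1) (β (n+1) • u (n+1)) - G (n+1) (β n • u n)‖
            ≤ ‖β (n+1) • u (n+1) - β n • u n‖ := Gnonexp _ _ _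
          _ = ‖β (n+1) • (u (n+1) - u n) + (β (n+1) - β n) • u n‖ := by
              congr 1; module
          _ ≤ ‖β (n+1) • (u (n+1) - u n)‖ + ‖(β (n+1) - β n) • u n‖ := norm_add_le _ _
          _ ≤ β (n+1) * s n + |β (n+1) - β n| * M := by
              rw [norm_smul, norm_smul, Real.norm_eq_abs, Real.norm_eq_abs,
                abs_of_nonneg (hβ (n+1)).1.le]
              exact add_le_add le_rfl
                (mul_le_mul_of_nonneg_left (hu_bd n) (abs_nonneg _))
      have hB : ‖G (n+1) (β n • u n) - G n (β n • u n)‖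
          ≤ Λ * ‖R (n+1) (β n • u n) - R n (β n • u n)‖ + |lam (n+1) - lam n| * (2*M) := by
        have hid : G (n+1) (β n • u n) - G n (β n • u n)
            = lam (n+1) • (R (n+1) (β n • u n) - R n (β n • u n))
              + (lam (n+1) - lam n) • (R n (β n • u n) - β n • u n) := by
          rw [hG]; simp only []; module
        rw [hid]
        calc ‖lam (n+1) • (R (n+1) (β n • u n) - R n (β n • u n))
              + (lam (n+1) - lam n) • (R n (β n • u n) - β n • u n)‖
            ≤ ‖lam (n+1) • (R (n+1) (β n • u n) - R n (β n • u n))‖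
              + ‖(lam (n+1) - lam n) • (R n (β n • u n) - β n • u n)‖ := norm_add_le _ _
          _ ≤ Λ * ‖R (n+1) (β n • u n) - R n (β n • u n)‖ + |lam (n+1) - lam n| * (2*M) := by
              rw [norm_smul, norm_smul, Real.norm_eq_abs, Real.norm_eq_abs,
                abs_of_nonneg (hlam (n+1)).1.le]
              exact add_le_add
                (mul_le_mul_of_nonneg_right (hΛ (n+1)) (norm_nonneg _))
                (mul_le_mul_of_nonneg_left (hRy_bd n n) (abs_nonneg _))
      have hsplit : s (n+1) ≤ β (n+1) * s n + |β (n+1) - β n| * M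
          + (Λ * ‖R (n+1) (β n • u n) - R n (β n • u n)‖ + |lam (n+1) - lam n| * (2*M)) := by
        have hid : u (n+2) - u (n+1)
            = (G (n+1) (β (n+1) • u (n+1)) - G (n+1) (β n • u n))
              + (G (n+1) (β n • u n) - G n (β n • u n)) := by
          rw [hrecG (n+1), hrecG n]; abel
        calc s (n+1) = ‖u (n+2) - u (n+1)‖ := rfl
          _ = ‖(G (n+1) (β (n+1) • u (n+1)) - G (n+1) (β n • u n))
              + (G (n+1) (β n • u n) - G n (β n • u n))‖ := by rw [hid]
          _ ≤ _ := norm_add_le _ _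
          _ ≤ _ := add_le_add hA hB
      have : (1 - (1 - β (n+1))) * s n + (1 - β (n+1)) * 0 + E n
          = β (n+1) * s n + E n := by ring
      rw [this, hE]; dsimp only
      nlinarith [hsplit]
  -- Step 3 : residuals tend to zero
  have hβ1 : Filter.Tendsto (fun n => 1 - β n) Filter.atTop (nhds 0) := by
    have := tendsto_const_nhds (x := (1:ℝ)) (f := Filter.atTop (α := ℕ))
    simpa using this.sub hβlim
  have hyu : Filter.Tendsto (fun n => ‖β n • u n - u n‖) Filter.atTop (nhds 0) := by
    apply squeeze_zero (fun n => norm_nonneg _) (g := fun n => (1 - β n) * M)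
    · intro n
      have hid : β n • u n - u n = (β n - 1) • u n := by module
      rw [hid, norm_smul, Real.norm_eq_abs, abs_of_nonpos (by linarith [(hβ n).2])]
      have := hu_bd n
      nlinarith [(hβ n).2, norm_nonneg (u n)]
    · simpa using hβ1.mul_const M
  have hRyy : Filter.Tendsto (fun n => ‖R n (β n • u n) - β n • u n‖) Filter.atTop (nhds 0) := by
    obtain ⟨c, hc, hcev⟩ := hlaminf
    apply squeeze_zero' (Filter.Eventually.of_forall (fun n => norm_nonneg _))
      (g := fun n => (1/c) * (s n + ‖β n • u n - u n‖))
    · filter_upwards [hcev] with n hcn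
      have h1 : lam n * ‖R n (β n • u n) - β n • u n‖ = ‖u (n+1) - β n • u n‖ := by
        rw [hrec n]
        have hid : β n • u n + lam n • (R n (β n • u n) - β n • u n) - β n • u n
            = lam n • (R n (β n • u n) - β n • u n) := by abel
        rw [hid, norm_smul, Real.norm_eq_abs, abs_of_nonneg (hlam n).1.le]
      have h2 : ‖u (n+1) - β n • u n‖ ≤ s n + ‖β n • u n - u n‖ := by
        calc ‖u (n+1) - β n • u n‖ = ‖(u (n+1) - u n) + (u n - β n • u n)‖ := by congr 1; abel
          _ ≤ ‖u (n+1) - u n‖ + ‖u n - β n • u n‖ := norm_add_le _ _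
          _ = s n + ‖β n • u n - u n‖ := by rw [norm_sub_rev (u n)]
      have h3 : c * ‖R n (β n • u n) - β n • u n‖ ≤ s n + ‖β n • u n - u n‖ := by
        calc c * ‖R n (β n • u n) - β n • u n‖
            ≤ lam n * ‖R n (β n • u n) - β n • u n‖ :=
              mul_le_mul_of_nonneg_right hcn (norm_nonneg _)
          _ = ‖u (n+1) - β n • u n‖ := h1
          _ ≤ _ := h2
      rw [one_div, ← div_eq_inv_mul, le_div_iff₀ hc]
      nlinarith [h3]
    · have := (hs0.add hyu).const_mul (1/c)
      simpa using this
  have hres : Filter.Tendsto (fun n => ‖u n - R n (u n)‖) Filter.atTop (nhds 0) := by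
    apply squeeze_zero (fun n => norm_nonneg _)
      (g := fun n => 2 * ‖β n • u n - u n‖ + ‖R n (β n • u n) - β n • u n‖)
    · intro n
      calc ‖u n - R n (u n)‖
          = ‖(u n - β n • u n) + (β n • u n - R n (β n • u n))
              + (R n (β n • u n) - R n (u n))‖ := by congr 1; abel
        _ ≤ ‖(u n - β n • u n) + (β n • u n - R n (β n • u n))‖
            + ‖R n (β n • u n) - R n (u n)‖ := norm_add_le _ _
        _ ≤ ‖u n - β n • u n‖ + ‖β n • u n - R n (β n • u n)‖
            + ‖R n (β n • u n) - R n (u n)‖ := by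
              have := norm_add_le (u n - β n • u n) (β n • u n - R n (β n • u n))
              linarith
        _ ≤ 2 * ‖β n • u n - u n‖ + ‖R n (β n • u n) - β n • u n‖ := by
            have h1 : ‖u n - β n • u n‖ = ‖β n • u n - u n‖ := norm_sub_rev _ _
            have h2 : ‖β n • u n - R n (β n • u n)‖ = ‖R n (β n • u n) - β n • u n‖ :=
              norm_sub_rev _ _
            have h3 : ‖R n (β n • u n) - R n (u n)‖ ≤ ‖β n • u n - u n‖ := Rnonexp n _ _
            linarith
    · have := (hyu.const_mul 2).add hRyy
      simpa using this
  -- Step 4 : variational inequality at xb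
  have hVI : ∀ x : H, (∀ n, R n x = x) → 0 ≤ ⟪xb, x - xb⟫ := by
    intro x hx
    have key : ∀ k : ℕ, 0 ≤ 2 * ⟪xb, x - xb⟫ + (1/((k:ℝ)+1)) * ‖x - xb‖^2 := by
      intro k
      set t : ℝ := 1/((k:ℝ)+1) with htdef
      have ht0 : 0 < t := by positivity
      have ht1 : t ≤ 1 := by
        rw [htdef, div_le_one (by positivity)]
        simp
      have hzfix : ∀ n, R n (xb + t • (x - xb)) = xb + t • (x - xb) := by
        intro n
        exact (hRT n _).2 (fix_seg (T n) (hT n) xb x ((hRT n xb).1 (hxb n))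
          ((hRT n x).1 (hx n)) t ht0.le ht1)
      have hm := hmin _ hzfix
      have hsq : ‖xb‖^2 ≤ ‖xb + t • (x - xb)‖^2 :=
        pow_le_pow_left₀ (norm_nonneg _) hm 2
      have hexp : ‖xb + t • (x - xb)‖^2
          = ‖xb‖^2 + 2 * (t * ⟪xb, x - xb⟫) + t^2 * ‖x - xb‖^2 := by
        rw [norm_add_sq_real, real_inner_smul_right, norm_smul, Real.norm_eq_abs,
          abs_of_nonneg ht0.le, mul_pow]
      rw [hexp] at hsq
      nlinarith [ht0, sq_nonneg (‖x - xb‖)]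
    have hlim : Filter.Tendsto (fun k : ℕ => 2 * ⟪xb, x - xb⟫ + (1/((k:ℝ)+1)) * ‖x - xb‖^2)
        Filter.atTop (nhds (2 * ⟪xb, x - xb⟫ + 0 * ‖x - xb‖^2)) := by
      exact tendsto_const_nhds.add (tendsto_one_div_add_atTop_nhds_zero_nat.mul_const _)
    have h0 := ge_of_tendsto' hlim key
    nlinarith [h0]
  -- Step 5 : limsup condition
  have hq : ∀ c : ℝ, 0 < c → ∀ᶠ n in Filter.atTop, -⟪xb, u n - xb⟫ ≤ c := by
    by_contra hcon
    push_neg at hcon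
    obtain ⟨c, hc, hfreq⟩ := hcon
    obtain ⟨ψ, hψmono, hψ⟩ := extraction_of_frequently_atTop hfreq
    obtain ⟨φ', x, hφ'mono, hweak⟩ := weak_cpt (fun k => u (ψ k)) M (fun k => hu_bd _)
    set χ : ℕ → ℕ := ψ ∘ φ' with hχ
    have hχmono : StrictMono χ := hψmono.comp hφ'mono
    have hweak' : ∀ z : H, Filter.Tendsto (fun k => ⟪u (χ k), z⟫) Filter.atTop (nhds ⟪x, z⟫) :=
      hweak
    have hres' : Filter.Tendsto (fun k => u (χ k) - R (χ k) (u (χ k))) Filter.atTop (nhds 0) := by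
      rw [tendsto_zero_iff_norm_tendsto_zero]
      exact hres.comp hχmono.tendsto_atTop
    have hxS : ∀ n, R n x = x := hasym χ hχmono x hweak' hres'
    have hVIx := hVI x hxS
    have h1 : Filter.Tendsto (fun k => ⟪xb, u (χ k) - xb⟫) Filter.atTop (nhds ⟪xb, x - xb⟫) := by
      have heqq : ∀ k, ⟪xb, u (χ k) - xb⟫ = ⟪u (χ k), xb⟫ - ⟪xb, xb⟫ := by
        intro k; rw [inner_sub_right, real_inner_comm]
      have hval : (⟪xb, x - xb⟫ : ℝ) = ⟪x, xb⟫ - ⟪xb, xb⟫ := by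
        rw [inner_sub_right, real_inner_comm]
      simp only [heqq, hval]
      exact (hweak' xb).sub_const _
    have h2 : ⟪xb, x - xb⟫ ≤ -c := by
      apply le_of_tendsto h1
      filter_upwards with k
      have := hψ (φ' k)
      have hcast : -⟪xb, u (χ k) - xb⟫ > c := this
      linarith
    linarith
  -- Step 6 : final convergence
  set a : ℕ → ℝ := fun n => ‖u n - xb‖^2 with ha_def
  set δf : ℕ → ℝ := fun n => 2 * ⟪β n • u n - xb, -xb⟫ with hδf_def
  have haT : Filter.Tendsto a Filter.atTop (nhds 0) := by
    apply xu_lemma a (fun n => 1 - β n) δf (fun _ => 0)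
      (fun n => by positivity)
      (fun n => by have := (hβ n).2; show (0:ℝ) ≤ 1 - β n; linarith)
      (fun n => by have := (hβ n).1; show (1:ℝ) - β n ≤ 1; linarith)
      hβdiv
    · -- limsup of δf
      intro c hc
      have hev1 : ∀ᶠ n in Filter.atTop, 2 * (‖β n • u n - u n‖ * ‖xb‖) ≤ c/2 := by
        have ht : Filter.Tendsto (fun n => 2 * (‖β n • u n - u n‖ * ‖xb‖))
            Filter.atTop (nhds 0) := by
          have := (hyu.mul_const ‖xb‖).const_mul 2
          simpa using this
        exact ht.eventually (eventually_le_nhds (by linarith))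
      have hev2 := hq (c/4) (by linarith)
      filter_upwards [hev1, hev2] with n h1 h2
      have hid : δf n = 2 * ⟪β n • u n - u n, -xb⟫ + 2 * ⟪u n - xb, -xb⟫ := by
        rw [hδf_def]; dsimp only
        have : β n • u n - xb = (β n • u n - u n) + (u n - xb) := by abel
        rw [this, inner_add_left]; ring
      have hb1 : ⟪β n • u n - u n, -xb⟫ ≤ ‖β n • u n - u n‖ * ‖xb‖ := by
        calc ⟪β n • u n - u n, -xb⟫ ≤ |⟪β n • u n - u n, -xb⟫| := le_abs_self _
          _ ≤ ‖β n • u n - u n‖ * ‖-xb‖ := abs_real_inner_le_norm _ _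
          _ = ‖β n • u n - u n‖ * ‖xb‖ := by rw [norm_neg]
      have hb2 : ⟪u n - xb, -xb⟫ ≤ c/4 := by
        have : (⟪u n - xb, -xb⟫ : ℝ) = -⟪xb, u n - xb⟫ := by
          rw [inner_neg_right, real_inner_comm]
        rw [this]; exact h2
      rw [hid]; linarith
    · intro n; exact le_rfl
    · exact summable_zero
    · -- recursion
      intro n
      have hstep : ‖u (n+1) - xb‖ ≤ ‖β n • u n - xb‖ := by
        rw [hrecG n]
        calc ‖G n (β n • u n) - xb‖ = ‖G n (β n • u n) - G n xb‖ := by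
              rw [Gfix n xb (hxb n)]
          _ ≤ ‖β n • u n - xb‖ := Gnonexp n _ _
      have hsq : a (n+1) ≤ ‖β n • u n - xb‖^2 := by
        rw [ha_def]; dsimp only
        exact pow_le_pow_left₀ (norm_nonneg _) hstep 2
      have hidy : β n • u n - xb = β n • (u n - xb) + (1 - β n) • (-xb) := by module
      have hexp : ‖β n • u n - xb‖^2
          = ‖β n • (u n - xb)‖^2 + 2 * ⟪β n • (u n - xb), (1 - β n) • (-xb)⟫
            + ‖(1 - β n) • (-xb)‖^2 := by
        rw [hidy, norm_add_sq_real]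
      have hinid : ⟪β n • u n - xb, (1 - β n) • (-xb)⟫
          = ⟪β n • (u n - xb), (1 - β n) • (-xb)⟫ + ‖(1 - β n) • (-xb)‖^2 := by
        rw [hidy, inner_add_left, real_inner_self_eq_norm_sq]
      have hsm : ⟪β n • u n - xb, (1 - β n) • (-xb)⟫ = (1 - β n) * ⟪β n • u n - xb, -xb⟫ :=
        real_inner_smul_right _ _ _
      have hA : ‖β n • (u n - xb)‖^2 = (β n)^2 * ‖u n - xb‖^2 := by
        rw [norm_smul, Real.norm_eq_abs, abs_of_nonneg (hβ n).1.le, mul_pow]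
      have hβsq : (β n)^2 * ‖u n - xb‖^2 ≤ β n * ‖u n - xb‖^2 := by
        have h1 := (hβ n).1; have h2 := (hβ n).2
        nlinarith [sq_nonneg (‖u n - xb‖)]
      have hfinal : a (n+1) ≤ β n * a n + (1 - β n) * δf n := by
        have e1 : ‖β n • u n - xb‖^2
            ≤ (β n)^2 * ‖u n - xb‖^2 + 2 * ⟪β n • u n - xb, (1 - β n) • (-xb)⟫ := by
          rw [hexp, ← hA]
          nlinarith [sq_nonneg (‖(1 - β n) • (-xb)‖), hinid]
        have e2 : 2 * ⟪β n • u n - xb, (1 - β n) • (-xb)⟫ = (1 - β n) * δf n := by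
          rw [hsm, hδf_def]; dsimp only; ring
        rw [ha_def]; dsimp only
        calc ‖u (n+1) - xb‖^2 ≤ ‖β n • u n - xb‖^2 := hsq
          _ ≤ (β n)^2 * ‖u n - xb‖^2 + 2 * ⟪β n • u n - xb, (1 - β n) • (-xb)⟫ := e1
          _ = (β n)^2 * ‖u n - xb‖^2 + (1 - β n) * δf n := by rw [e2]
          _ ≤ β n * ‖u n - xb‖^2 + (1 - β n) * δf n := by linarith [hβsq]
      have : (1 - (1 - β n)) * a n + (1 - β n) * δf n + 0 = β n * a n + (1 - β n) * δf n := by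
        ring
      rw [this]
      exact hfinal
  -- conclude
  rw [tendsto_iff_norm_sub_tendsto_zero]
  have hns : (fun n => ‖u n - xb‖) = fun n => Real.sqrt (a n) := by
    funext n
    rw [ha_def]; dsimp only
    rw [Real.sqrt_sq (norm_nonneg _)]
  rw [hns]
  have := (Real.continuous_sqrt.tendsto 0).comp haT
  simpa [Function.comp_def] using this
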